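/- Let (𝕍, ρ) be a finite-dimensional representation of 𝔰𝔬(n) by skew-symmetric endomorphisms of an inner product space, and define the conformal weight operator B : ℝⁿ ⊗ 𝕍 → ℝⁿ ⊗ 𝕍 by B(α ⊗ v) = Σ_{i=1}^n e_i ⊗ ρ(e_i ∧ α)v, where {e_i} is an orthonormal basis of ℝⁿ. Then B is equivariant for the diagonal action of 𝔰𝔬(n) on ℝⁿ ⊗ 𝕍, i.e., B commutes with the action of every element of 𝔰𝔬(n). -/

import Mathlib

noncomputable section
open scoped RealInnerProductSpace TensorProduct
open Finset

/-- Standard orthonormal basis vector of `ℝⁿ`. -/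
def esingle {n : ℕ} (i : Fin n) : EuclideanSpace ℝ (Fin n) := EuclideanSpace.single i 1

/-- `u ∧ v ∈ 𝔰𝔬(n)`, acting by `X ↦ ⟨u,X⟩v − ⟨v,X⟩u`. -/
def wedge {n : ℕ} (u v : EuclideanSpace ℝ (Fin n)) :
    Module.End ℝ (EuclideanSpace ℝ (Fin n)) :=
  ((innerSL ℝ u).toLinearMap).smulRight v - ((innerSL ℝ v).toLinearMap).smulRight u


lemma wedge_apply {n : ℕ} (u v X : EuclideanSpace ℝ (Fin n)) :
    wedge u v X = ⟪u, X⟫ • v - ⟪v, X⟫ • u := by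
  simp [wedge]

lemma wedge_skew {n : ℕ} (u v : EuclideanSpace ℝ (Fin n)) :
    LinearMap.adjoint (wedge u v) = -(wedge u v) := by
  symm
  rw [LinearMap.eq_adjoint_iff]
  intro x y
  simp only [LinearMap.neg_apply, wedge_apply, inner_neg_left, inner_sub_left, inner_sub_right,
    real_inner_smul_left, real_inner_smul_right]
  rw [real_inner_comm x u, real_inner_comm x v]
  ring

lemma wedge_bracket {n : ℕ} (A : Module.End ℝ (EuclideanSpace ℝ (Fin n)))
    (hA : LinearMap.adjoint A = -A) (u v : EuclideanSpace ℝ (Fin n)) :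
    ⁅A, wedge u v⁆ = wedge (A u) v + wedge u (A v) := by
  refine LinearMap.ext fun X => ?_
  have h1 : ⟪u, A X⟫ = -⟪A u, X⟫ := by
    rw [← LinearMap.adjoint_inner_left, hA]; simp
  have h2 : ⟪v, A X⟫ = -⟪A v, X⟫ := by
    rw [← LinearMap.adjoint_inner_left, hA]; simp
  simp only [Ring.lie_def, LinearMap.sub_apply, Module.End.mul_apply, LinearMap.add_apply,
    wedge_apply, h1, h2, map_sub, map_smul]
  module

lemma decomp {n : ℕ} (x : EuclideanSpace ℝ (Fin n)) :
    x = ∑ j : Fin n, ⟪esingle j, x⟫ • esingle j := by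
  have h := (EuclideanSpace.basisFun (Fin n) ℝ).sum_repr x
  simp only [EuclideanSpace.basisFun_repr, EuclideanSpace.basisFun_apply] at h
  rw [show (∑ j : Fin n, ⟪esingle j, x⟫ • esingle j) = ∑ j : Fin n, x j • EuclideanSpace.single j 1
    from Finset.sum_congr rfl fun j _ => by simp [esingle, EuclideanSpace.inner_single_left], h]

lemma skew_entry {n : ℕ} (A : Module.End ℝ (EuclideanSpace ℝ (Fin n)))
    (hA : LinearMap.adjoint A = -A) (i j : Fin n) :
    ⟪esingle i, A (esingle j)⟫ = -⟪esingle j, A (esingle i)⟫ := by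
  rw [← LinearMap.adjoint_inner_left, hA]
  simp [real_inner_comm]

lemma wedge_sum_smul_left {n : ℕ} (c : Fin n → ℝ) (α : EuclideanSpace ℝ (Fin n)) :
    wedge (∑ j : Fin n, c j • esingle j) α = ∑ j : Fin n, c j • wedge (esingle j) α := by
  refine LinearMap.ext fun X => ?_
  simp only [LinearMap.sum_apply, LinearMap.smul_apply, wedge_apply, sum_inner,
    real_inner_smul_left, smul_sub, Finset.sum_sub_distrib, Finset.sum_smul, smul_smul,
    Finset.smul_sum]
  congr 1
  exact Finset.sum_congr rfl fun j _ => by rw [mul_comm]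

/-- The conformal weight operator `B(α ⊗ v) = Σ_i e_i ⊗ ρ(e_i ∧ α)v` commutes with the
diagonal action `A ⊗ id + id ⊗ ρ(A)` of every `A ∈ 𝔰𝔬(n)` (i.e. every skew-symmetric `A`),
whenever `ρ` is a representation of `𝔰𝔬(n)` by skew-symmetric endomorphisms. -/
theorem conformal_weight_operator_equivariant (n : ℕ)
    (V : Type*) [NormedAddCommGroup V] [InnerProductSpace ℝ V] [FiniteDimensional ℝ V]
    (ρ : Module.End ℝ (EuclideanSpace ℝ (Fin n)) →ₗ[ℝ] Module.End ℝ V)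
    (hρ : ∀ A A' : Module.End ℝ (EuclideanSpace ℝ (Fin n)),
      LinearMap.adjoint A = -A → LinearMap.adjoint A' = -A' → ρ ⁅A, A'⁆ = ⁅ρ A, ρ A'⁆)
    (hskew : ∀ A : Module.End ℝ (EuclideanSpace ℝ (Fin n)),
      LinearMap.adjoint A = -A → LinearMap.adjoint (ρ A) = -(ρ A))
    (B : EuclideanSpace ℝ (Fin n) ⊗[ℝ] V →ₗ[ℝ] EuclideanSpace ℝ (Fin n) ⊗[ℝ] V)
    (hB : ∀ (α : EuclideanSpace ℝ (Fin n)) (v : V),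
      B (α ⊗ₜ v) = ∑ i : Fin n, esingle i ⊗ₜ (ρ (wedge (esingle i) α) v))
    (A : Module.End ℝ (EuclideanSpace ℝ (Fin n))) (hA : LinearMap.adjoint A = -A) :
    B ∘ₗ (TensorProduct.map A LinearMap.id + TensorProduct.map LinearMap.id (ρ A))
      = (TensorProduct.map A LinearMap.id + TensorProduct.map LinearMap.id (ρ A)) ∘ₗ B := by
  apply TensorProduct.ext'
  intro α v
  have key : (∑ i : Fin n, esingle i ⊗ₜ[ℝ] (ρ (wedge (A (esingle i)) α) v))
      = - ∑ i : Fin n, (A (esingle i)) ⊗ₜ[ℝ] (ρ (wedge (esingle i) α) v) := by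
    have lhs : ∀ i : Fin n, esingle i ⊗ₜ[ℝ] (ρ (wedge (A (esingle i)) α) v)
        = ∑ j : Fin n, ⟪esingle j, A (esingle i)⟫ •
            (esingle i ⊗ₜ[ℝ] (ρ (wedge (esingle j) α) v)) := by
      intro i
      rw [show wedge (A (esingle i)) α
            = ∑ j : Fin n, ⟪esingle j, A (esingle i)⟫ • wedge (esingle j) α by
          rw [← wedge_sum_smul_left, ← decomp]]
      simp [TensorProduct.tmul_sum, TensorProduct.tmul_smul]
    have rhs : ∀ i : Fin n, (A (esingle i)) ⊗ₜ[ℝ] (ρ (wedge (esingle i) α) v)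
        = ∑ j : Fin n, ⟪esingle j, A (esingle i)⟫ •
            (esingle j ⊗ₜ[ℝ] (ρ (wedge (esingle i) α) v)) := by
      intro i
      conv_lhs => rw [decomp (A (esingle i))]
      simp [TensorProduct.sum_tmul, TensorProduct.smul_tmul]
    simp only [lhs, rhs, ← Finset.sum_neg_distrib]
    rw [Finset.sum_comm]
    refine Finset.sum_congr rfl fun i _ => Finset.sum_congr rfl fun j _ => ?_
    rw [skew_entry A hA j i]
    simp
  have expand : ∀ i : Fin n, ρ (wedge (esingle i) (A α)) v
      = ρ A (ρ (wedge (esingle i) α) v) - ρ (wedge (esingle i) α) (ρ A v)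
        - ρ (wedge (A (esingle i)) α) v := by
    intro i
    have hb := wedge_bracket A hA (esingle i) α
    have : wedge (esingle i) (A α) = ⁅A, wedge (esingle i) α⁆ - wedge (A (esingle i)) α := by
      rw [hb]; abel
    rw [this, map_sub, hρ A _ hA (wedge_skew _ _), Ring.lie_def]
    simp [LinearMap.sub_apply, Module.End.mul_apply]
  simp only [LinearMap.comp_apply, LinearMap.add_apply, TensorProduct.map_tmul,
    LinearMap.id_coe, id_eq, map_add, hB, map_sum, expand, TensorProduct.tmul_sub]
  rw [Finset.sum_sub_distrib, Finset.sum_sub_distrib, key, Finset.sum_add_distrib]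
  abel
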